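/- Let A ∈ ℝ^{m×n} have full row rank and x ∈ ℝⁿ with x > 0. For any ζ_x ∈ ℝ^m, define λ_x = −Aᵀ(AAᵀ)⁻¹ζ_x and ψ_x = XAᵀ(AX²Aᵀ)⁻¹ζ_x + X⁻¹λ_x. Then ‖ψ_x‖ ≤ ( 1/( (min_j x_j)·σ_min(A) ) + 1/√(λ_min(AX²Aᵀ)) )·‖ζ_x‖; in particular, each term is bounded as ‖X⁻¹λ_x‖ ≤ ‖ζ_x‖/((min_j x_j)·σ_min(A)) and ‖XAᵀ(AX²Aᵀ)⁻¹ζ_x‖ ≤ ‖ζ_x‖/√(λ_min(AX²Aᵀ)). -/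

import Mathlib

open Matrix

noncomputable def eucNorm {ι : Type*} [Fintype ι] (v : ι → ℝ) : ℝ :=
  Real.sqrt (∑ i, (v i) ^ 2)

noncomputable def opNorm {ι κ : Type*} [Fintype ι] [Fintype κ]
    (M : Matrix ι κ ℝ) : ℝ :=
  sSup {r : ℝ | ∃ v : κ → ℝ, eucNorm v ≤ 1 ∧ r = eucNorm (M *ᵥ v)}

noncomputable def lambdaMin {ι : Type*} [Fintype ι] (M : Matrix ι ι ℝ) : ℝ :=
  sInf {r : ℝ | ∃ v : ι → ℝ, eucNorm v = 1 ∧ r = v ⬝ᵥ (M *ᵥ v)}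

noncomputable def lambdaMax {ι : Type*} [Fintype ι] (M : Matrix ι ι ℝ) : ℝ :=
  sSup {r : ℝ | ∃ v : ι → ℝ, eucNorm v = 1 ∧ r = v ⬝ᵥ (M *ᵥ v)}

noncomputable def condNum {ι : Type*} [Fintype ι] (M : Matrix ι ι ℝ) : ℝ :=
  lambdaMax M / lambdaMin M

noncomputable def gradProj {m n : ℕ} (B : Matrix (Fin m) (Fin n) ℝ) :
    Matrix (Fin n) (Fin n) ℝ :=
  1 - Bᵀ * (B * Bᵀ)⁻¹ * B

/-- The proximity measure `δ(x, μ) = ‖P_{AX}((1/μ) X c - e)‖`. -/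
noncomputable def prox {m n : ℕ} (A : Matrix (Fin m) (Fin n) ℝ)
    (c x : Fin n → ℝ) (μ : ℝ) : ℝ :=
  eucNorm (gradProj (A * Matrix.diagonal x) *ᵥ (μ⁻¹ • (Matrix.diagonal x *ᵥ c) - 1))

/-- The proximity measure as `min_{(y,s) ∈ F_d} ‖(1/μ) X s - e‖`. -/
noncomputable def proxMin {m n : ℕ} (A : Matrix (Fin m) (Fin n) ℝ)
    (c x : Fin n → ℝ) (μ : ℝ) : ℝ :=
  sInf {r : ℝ | ∃ (y : Fin m → ℝ) (s : Fin n → ℝ),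
    Aᵀ *ᵥ y + s = c ∧ (∀ i, 0 ≤ s i) ∧
    r = eucNorm (μ⁻¹ • (Matrix.diagonal x *ᵥ s) - 1)}

/-- The primal normal matrix `A X² Aᵀ` is positive semidefinite. -/
theorem normalPSD {m n : ℕ} (A : Matrix (Fin m) (Fin n) ℝ) (x : Fin n → ℝ) :
    (A * Matrix.diagonal x ^ 2 * Aᵀ).PosSemidef := by
  have h : A * Matrix.diagonal x ^ 2 * Aᵀ
      = (A * Matrix.diagonal x) * (A * Matrix.diagonal x)ᴴ := by
    rw [Matrix.conjTranspose_mul, Matrix.conjTranspose_eq_transpose_of_trivial,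
      Matrix.conjTranspose_eq_transpose_of_trivial, Matrix.diagonal_transpose, pow_two,
      Matrix.mul_assoc, Matrix.mul_assoc, Matrix.mul_assoc]
  rw [h]
  exact Matrix.posSemidef_self_mul_conjTranspose _

lemma enorm_nonneg' {ι : Type*} [Fintype ι] (v : ι → ℝ) : 0 ≤ eucNorm v := Real.sqrt_nonneg _

lemma enorm_sq' {ι : Type*} [Fintype ι] (v : ι → ℝ) : eucNorm v ^ 2 = v ⬝ᵥ v := by
  rw [eucNorm, Real.sq_sqrt (Finset.sum_nonneg fun i _ => sq_nonneg _)]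
  simp [dotProduct, pow_two]

lemma enorm_neg' {ι : Type*} [Fintype ι] (v : ι → ℝ) : eucNorm (-v) = eucNorm v := by
  simp [eucNorm]

lemma dot_le_enorm {ι : Type*} [Fintype ι] (v w : ι → ℝ) : v ⬝ᵥ w ≤ eucNorm v * eucNorm w :=
  Real.sum_mul_le_sqrt_mul_sqrt _ _ _

lemma enorm_smul' {ι : Type*} [Fintype ι] (c : ℝ) (v : ι → ℝ) :
    eucNorm (c • v) = |c| * eucNorm v := by
  simp only [eucNorm, Pi.smul_apply, smul_eq_mul, mul_pow, ← Finset.mul_sum]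
  rw [Real.sqrt_mul (sq_nonneg c), Real.sqrt_sq_eq_abs]

lemma eucNorm_add_le {ι : Type*} [Fintype ι] (v w : ι → ℝ) :
    eucNorm (v + w) ≤ eucNorm v + eucNorm w := by
  have h1 : eucNorm (v + w) ^ 2 ≤ (eucNorm v + eucNorm w) ^ 2 := by
    rw [enorm_sq']
    have : (v + w) ⬝ᵥ (v + w) = v ⬝ᵥ v + 2 * (v ⬝ᵥ w) + w ⬝ᵥ w := by
      simp [add_dotProduct, dotProduct_add, dotProduct_comm w v]; ring
    rw [this, ← enorm_sq', ← enorm_sq']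
    nlinarith [dot_le_enorm v w]
  calc eucNorm (v + w) = Real.sqrt (eucNorm (v + w) ^ 2) := (Real.sqrt_sq (enorm_nonneg' _)).symm
    _ ≤ Real.sqrt ((eucNorm v + eucNorm w) ^ 2) := Real.sqrt_le_sqrt h1
    _ = eucNorm v + eucNorm w := Real.sqrt_sq (add_nonneg (enorm_nonneg' _) (enorm_nonneg' _))

lemma enorm_pos_of_ne {ι : Type*} [Fintype ι] {v : ι → ℝ} (hv : v ≠ 0) : 0 < eucNorm v := by
  obtain ⟨i, hi⟩ := Function.ne_iff.mp hv
  rw [eucNorm, Real.sqrt_pos]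
  exact lt_of_lt_of_le (pow_two_pos_of_ne_zero (by simpa using hi)) (Finset.single_le_sum (fun j _ => sq_nonneg (v j)) (Finset.mem_univ i))

lemma lambdaMin_bddBelow {ι : Type*} [Fintype ι] {M : Matrix ι ι ℝ} (hM : M.PosSemidef) :
    BddBelow {r : ℝ | ∃ v : ι → ℝ, eucNorm v = 1 ∧ r = v ⬝ᵥ (M *ᵥ v)} := by
  refine ⟨0, fun r ⟨v, hv, hr⟩ => ?_⟩
  subst hr
  simpa using hM.dotProduct_mulVec_nonneg v

lemma lambdaMin_le' {ι : Type*} [Fintype ι] {M : Matrix ι ι ℝ} (hM : M.PosSemidef)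
    {v : ι → ℝ} (hv : eucNorm v = 1) : lambdaMin M ≤ v ⬝ᵥ (M *ᵥ v) :=
  csInf_le (lambdaMin_bddBelow hM) ⟨v, hv, rfl⟩

lemma lambdaMin_mul_le {ι : Type*} [Fintype ι] {M : Matrix ι ι ℝ} (hM : M.PosSemidef)
    (v : ι → ℝ) : lambdaMin M * (v ⬝ᵥ v) ≤ v ⬝ᵥ (M *ᵥ v) := by
  by_cases hv : v = 0
  · simp [hv]
  · have hn : 0 < eucNorm v := enorm_pos_of_ne hv
    set c : ℝ := (eucNorm v)⁻¹ with hc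
    have hu : eucNorm (c • v) = 1 := by
      rw [enorm_smul', abs_of_pos (by positivity)]
      exact inv_mul_cancel₀ hn.ne'
    have h2 := lambdaMin_le' hM hu
    have h3 : (c • v) ⬝ᵥ (M *ᵥ (c • v)) = c ^ 2 * (v ⬝ᵥ (M *ᵥ v)) := by
      rw [smul_dotProduct, mulVec_smul, dotProduct_smul]
      simp only [smul_eq_mul]; ring
    rw [h3] at h2
    have h4 : v ⬝ᵥ v = eucNorm v ^ 2 := (enorm_sq' v).symm
    rw [h4]
    have hc2 : c ^ 2 * eucNorm v ^ 2 = 1 := by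
      rw [hc]; field_simp
    calc lambdaMin M * eucNorm v ^ 2 ≤ (c ^ 2 * (v ⬝ᵥ (M *ᵥ v))) * eucNorm v ^ 2 :=
          mul_le_mul_of_nonneg_right h2 (sq_nonneg _)
      _ = (v ⬝ᵥ (M *ᵥ v)) * (c ^ 2 * eucNorm v ^ 2) := by ring
      _ = v ⬝ᵥ (M *ᵥ v) := by rw [hc2, mul_one]

lemma enorm_eq_norm {ι : Type*} [Fintype ι] (v : EuclideanSpace ℝ ι) :
    eucNorm ((WithLp.equiv 2 (ι → ℝ)) v) = ‖v‖ := by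
  rw [EuclideanSpace.norm_eq, eucNorm]
  congr 1
  refine Finset.sum_congr rfl fun i _ => ?_
  rw [Real.norm_eq_abs, sq_abs]
  rfl

lemma lambdaMin_pos {ι : Type*} [Fintype ι] [DecidableEq ι] [Nonempty ι]
    {M : Matrix ι ι ℝ} (hM : M.PosDef) : 0 < lambdaMin M := by
  classical
  obtain ⟨i₀⟩ := ‹Nonempty ι›
  haveI : Nontrivial (EuclideanSpace ℝ ι) := ⟨EuclideanSpace.single i₀ 1, 0, by
    intro h
    have := congrArg (· i₀) h
    simp [EuclideanSpace.single_apply] at this⟩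
  set f : EuclideanSpace ℝ ι → ℝ :=
    fun v => (WithLp.equiv 2 (ι → ℝ)) v ⬝ᵥ (M *ᵥ (WithLp.equiv 2 (ι → ℝ)) v) with hf
  have hcoord : ∀ i, Continuous fun v : EuclideanSpace ℝ ι => (WithLp.equiv 2 (ι → ℝ)) v i :=
    fun i => (continuous_apply i).comp (PiLp.continuous_ofLp 2 (fun _ : ι => ℝ))
  have hcont : Continuous f := by
    apply continuous_finset_sum
    intro i _
    exact (hcoord i).mul (continuous_finset_sum _ fun j _ => (continuous_const.mul (hcoord j)))
  have hsph : IsCompact (Metric.sphere (0 : EuclideanSpace ℝ ι) 1) := isCompact_sphere 0 1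
  have hne : (Metric.sphere (0 : EuclideanSpace ℝ ι) 1).Nonempty :=
    NormedSpace.sphere_nonempty.mpr zero_le_one
  obtain ⟨w, hw, hmin⟩ := hsph.exists_isMinOn hne hcont.continuousOn
  have hwn : ‖w‖ = 1 := by simpa using hw
  have hw0 : w ≠ 0 := fun h => by simp [h] at hwn
  have hfw : 0 < f w := by
    have := hM.dotProduct_mulVec_pos (x := (WithLp.equiv 2 (ι → ℝ)) w) (fun h => hw0 (by
      simpa using h))
    simpa [hf] using this
  refine lt_of_lt_of_le hfw (le_csInf ⟨f w, (WithLp.equiv 2 (ι → ℝ)) w, by rw [enorm_eq_norm, hwn], rfl⟩ ?_)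
  rintro r ⟨v, hv, rfl⟩
  have hvmem : (WithLp.equiv 2 (ι → ℝ)).symm v ∈ Metric.sphere (0 : EuclideanSpace ℝ ι) 1 := by
    rw [mem_sphere_iff_norm, sub_zero, ← enorm_eq_norm]
    simpa using hv
  have := hmin hvmem
  simpa [hf] using this

lemma posDef_mul_transpose_of_rank {m n : ℕ} (B : Matrix (Fin m) (Fin n) ℝ)
    (hrank : B.rank = m) : (B * Bᵀ).PosDef := by
  have hpsd : (B * Bᵀ).PosSemidef := by
    have := Matrix.posSemidef_self_mul_conjTranspose B
    simpa [Matrix.conjTranspose_eq_transpose_of_trivial] using this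
  refine Matrix.PosDef.of_dotProduct_mulVec_pos hpsd.1 fun v hv => ?_
  rcases (hpsd.dotProduct_mulVec_nonneg v).lt_or_eq with h | h
  · simpa using h
  · exfalso
    have h0 : (B * Bᵀ) *ᵥ v = 0 := (hpsd.dotProduct_mulVec_zero_iff v).mp h.symm
    have hr : (B * Bᵀ).rank = m := by rw [Matrix.rank_self_mul_transpose, hrank]
    have hinj : Function.Injective (B * Bᵀ).mulVecLin := by
      rw [← LinearMap.ker_eq_bot]
      rw [LinearMap.ker_eq_bot]
      refine (LinearMap.injective_iff_surjective).mpr ?_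
      rw [← LinearMap.range_eq_top]
      apply Submodule.eq_top_of_finrank_eq
      rw [← Matrix.rank, hr, Module.finrank_fintype_fun_eq_card, Fintype.card_fin]
    have hz : (B * Bᵀ).mulVecLin v = 0 := by rw [Matrix.mulVecLin_apply]; exact h0
    exact hv (hinj (hz.trans (map_zero _).symm))

lemma inv_mulVec_bound {k : ℕ} {M : Matrix (Fin k) (Fin k) ℝ} (hM : M.PosDef)
    (ζ : Fin k → ℝ) : lambdaMin M * eucNorm (M⁻¹ *ᵥ ζ) ≤ eucNorm ζ := by
  set u := M⁻¹ *ᵥ ζ with hu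
  have hMu : M *ᵥ u = ζ := by
    rw [hu, Matrix.mulVec_mulVec, Matrix.mul_nonsing_inv _ (isUnit_iff_ne_zero.mpr hM.det_pos.ne'),
      Matrix.one_mulVec]
  have h1 : lambdaMin M * (u ⬝ᵥ u) ≤ u ⬝ᵥ (M *ᵥ u) := lambdaMin_mul_le hM.posSemidef u
  rw [hMu] at h1
  have h2 : u ⬝ᵥ ζ ≤ eucNorm u * eucNorm ζ := dot_le_enorm u ζ
  have h3 : lambdaMin M * eucNorm u ^ 2 ≤ eucNorm u * eucNorm ζ := by
    rw [enorm_sq']; linarith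
  rcases (enorm_nonneg' u).lt_or_eq with h | h
  · have := mul_le_mul_of_nonneg_left h3 (le_of_lt (inv_pos.mpr h))
    calc lambdaMin M * eucNorm u = (eucNorm u)⁻¹ * (lambdaMin M * eucNorm u ^ 2) := by
          field_simp
      _ ≤ (eucNorm u)⁻¹ * (eucNorm u * eucNorm ζ) := this
      _ = eucNorm ζ := by field_simp
  · rw [← h, mul_zero]; exact enorm_nonneg' ζ

lemma quad_inv_bound {k : ℕ} {M : Matrix (Fin k) (Fin k) ℝ} (hM : M.PosDef)
    (hlam : 0 < lambdaMin M) (ζ : Fin k → ℝ) :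
    ζ ⬝ᵥ (M⁻¹ *ᵥ ζ) ≤ eucNorm ζ ^ 2 / lambdaMin M := by
  have h1 := inv_mulVec_bound hM ζ
  have h2 : ζ ⬝ᵥ (M⁻¹ *ᵥ ζ) ≤ eucNorm ζ * eucNorm (M⁻¹ *ᵥ ζ) := dot_le_enorm _ _
  have h3 : eucNorm (M⁻¹ *ᵥ ζ) ≤ eucNorm ζ / lambdaMin M := by
    rw [le_div_iff₀ hlam]; linarith
  calc ζ ⬝ᵥ (M⁻¹ *ᵥ ζ) ≤ eucNorm ζ * (eucNorm ζ / lambdaMin M) :=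
        h2.trans (mul_le_mul_of_nonneg_left h3 (enorm_nonneg' _))
    _ = eucNorm ζ ^ 2 / lambdaMin M := by ring

lemma BT_bound {m n : ℕ} (B : Matrix (Fin m) (Fin n) ℝ) (hM : (B * Bᵀ).PosDef)
    (hlam : 0 < lambdaMin (B * Bᵀ)) (ζ : Fin m → ℝ) :
    eucNorm (Bᵀ *ᵥ ((B * Bᵀ)⁻¹ *ᵥ ζ)) ≤ eucNorm ζ / Real.sqrt (lambdaMin (B * Bᵀ)) := by
  set M := B * Bᵀ with hMdef
  set u := M⁻¹ *ᵥ ζ with hu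
  set w := Bᵀ *ᵥ u with hw
  have hMu : M *ᵥ u = ζ := by
    rw [hu, Matrix.mulVec_mulVec, Matrix.mul_nonsing_inv _ (isUnit_iff_ne_zero.mpr hM.det_pos.ne'),
      Matrix.one_mulVec]
  have hsq : eucNorm w ^ 2 = ζ ⬝ᵥ u := by
    rw [enorm_sq', hw, Matrix.mulVec_transpose, ← Matrix.dotProduct_mulVec,
      ← Matrix.mulVec_transpose, Matrix.mulVec_mulVec, ← hMdef, hMu]
    exact dotProduct_comm u ζ
  have hq : ζ ⬝ᵥ u ≤ eucNorm ζ ^ 2 / lambdaMin M := quad_inv_bound hM hlam ζ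
  have h1 : eucNorm w ^ 2 ≤ (eucNorm ζ / Real.sqrt (lambdaMin M)) ^ 2 := by
    rw [hsq] at *
    rw [div_pow, Real.sq_sqrt hlam.le]
    exact hq
  calc eucNorm w = Real.sqrt (eucNorm w ^ 2) := (Real.sqrt_sq (enorm_nonneg' _)).symm
    _ ≤ Real.sqrt ((eucNorm ζ / Real.sqrt (lambdaMin M)) ^ 2) := Real.sqrt_le_sqrt h1
    _ = eucNorm ζ / Real.sqrt (lambdaMin M) :=
        Real.sqrt_sq (div_nonneg (enorm_nonneg' _) (Real.sqrt_nonneg _))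

lemma diag_inv_eq {n : ℕ} {x : Fin n → ℝ} (hx : ∀ i, 0 < x i) :
    (Matrix.diagonal x)⁻¹ = Matrix.diagonal (fun i => (x i)⁻¹) := by
  apply Matrix.inv_eq_right_inv
  rw [Matrix.diagonal_mul_diagonal]
  have h : (fun i => x i * (x i)⁻¹) = fun _ => (1 : ℝ) :=
    funext fun i => mul_inv_cancel₀ (hx i).ne'
  rw [h, Matrix.diagonal_one]

lemma enorm_diag_inv_le {n : ℕ} {x : Fin n → ℝ} (hx : ∀ i, 0 < x i) {s : ℝ}
    (hs : 0 < s) (hsle : ∀ i, s ≤ x i) (v : Fin n → ℝ) :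
    eucNorm ((Matrix.diagonal x)⁻¹ *ᵥ v) ≤ s⁻¹ * eucNorm v := by
  rw [diag_inv_eq hx]
  have key : ∀ i, (((Matrix.diagonal fun i => (x i)⁻¹) *ᵥ v) i) ^ 2 ≤ s⁻¹ ^ 2 * v i ^ 2 := by
    intro i
    rw [Matrix.mulVec_diagonal, mul_pow]
    exact mul_le_mul_of_nonneg_right
      (pow_le_pow_left₀ (inv_nonneg.mpr (hx i).le) (inv_anti₀ hs (hsle i)) 2)
      (sq_nonneg _)
  calc eucNorm ((Matrix.diagonal fun i => (x i)⁻¹) *ᵥ v)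
      ≤ Real.sqrt (∑ i, s⁻¹ ^ 2 * v i ^ 2) :=
        Real.sqrt_le_sqrt (Finset.sum_le_sum fun i _ => key i)
    _ = s⁻¹ * eucNorm v := by
        rw [← Finset.mul_sum, Real.sqrt_mul (sq_nonneg _), Real.sqrt_sq (inv_nonneg.mpr hs.le)]
        rfl


/-- bound on the error vector `ψ_x` induced by an inexact
normal-equation solve. -/
theorem stmt_13 {m n : ℕ} (A : Matrix (Fin m) (Fin n) ℝ)
    (hrank : A.rank = m)
    (x : Fin n → ℝ) (hx : ∀ i, 0 < x i)
    (ζx : Fin m → ℝ)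
    (lamx : Fin n → ℝ) (hlamx : lamx = -((Aᵀ * (A * Aᵀ)⁻¹) *ᵥ ζx))
    (ψx : Fin n → ℝ)
    (hψx : ψx = (Matrix.diagonal x * Aᵀ * (A * Matrix.diagonal x ^ 2 * Aᵀ)⁻¹) *ᵥ ζx
      + (Matrix.diagonal x)⁻¹ *ᵥ lamx) :
    eucNorm ψx ≤ (1 / (sInf (Set.range x) * Real.sqrt (lambdaMin (A * Aᵀ)))
        + 1 / Real.sqrt (lambdaMin (A * Matrix.diagonal x ^ 2 * Aᵀ))) * eucNorm ζx ∧
    eucNorm ((Matrix.diagonal x)⁻¹ *ᵥ lamx)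
      ≤ eucNorm ζx / (sInf (Set.range x) * Real.sqrt (lambdaMin (A * Aᵀ))) ∧
    eucNorm ((Matrix.diagonal x * Aᵀ * (A * Matrix.diagonal x ^ 2 * Aᵀ)⁻¹) *ᵥ ζx)
      ≤ eucNorm ζx / Real.sqrt (lambdaMin (A * Matrix.diagonal x ^ 2 * Aᵀ)) := by
  rcases Nat.eq_zero_or_pos m with hm | hm
  · subst hm
    have hζ : eucNorm ζx = 0 := by simp [eucNorm]
    have h1 : ∀ (P : Matrix (Fin n) (Fin 0) ℝ), P *ᵥ ζx = 0 := fun P => by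
      funext i; simp [Matrix.mulVec, dotProduct]
    have hl0 : lamx = 0 := by rw [hlamx, h1, neg_zero]
    have hψ0 : ψx = 0 := by rw [hψx, h1, hl0, Matrix.mulVec_zero, add_zero]
    rw [hψ0, hl0, hζ, h1, Matrix.mulVec_zero]
    simp [eucNorm]
  · haveI : Nonempty (Fin m) := ⟨⟨0, hm⟩⟩
    have hn : 0 < n := by
      by_contra h
      push_neg at h
      interval_cases n
      have := Matrix.rank_le_width A
      omega
    haveI : Nonempty (Fin n) := ⟨⟨0, hn⟩⟩
    set X := Matrix.diagonal x with hX
    set B := A * X with hB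
    have hXT : Xᵀ = X := Matrix.diagonal_transpose x
    have hBBT : B * Bᵀ = A * X ^ 2 * Aᵀ := by
      rw [hB, Matrix.transpose_mul, hXT, pow_two]
      simp [Matrix.mul_assoc]
    have hdet : IsUnit X.det := by
      rw [hX, Matrix.det_diagonal]
      exact isUnit_iff_ne_zero.mpr (Finset.prod_ne_zero_iff.mpr fun i _ => (hx i).ne')
    have hrB : B.rank = m := by
      rw [hB, Matrix.rank_mul_eq_left_of_isUnit_det X A hdet, hrank]
    have hPD1 : (A * Aᵀ).PosDef := posDef_mul_transpose_of_rank A hrank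
    have hPD2' : (B * Bᵀ).PosDef := posDef_mul_transpose_of_rank B hrB
    have hPD2 : (A * X ^ 2 * Aᵀ).PosDef := hBBT ▸ hPD2'
    have hl1 : 0 < lambdaMin (A * Aᵀ) := lambdaMin_pos hPD1
    have hl2 : 0 < lambdaMin (A * X ^ 2 * Aᵀ) := lambdaMin_pos hPD2
    set s := sInf (Set.range x) with hs
    have hsmem : s ∈ Set.range x := (Set.range_nonempty x).csInf_mem (Set.finite_range x)
    have hspos : 0 < s := by obtain ⟨i, hi⟩ := hsmem; rw [← hi]; exact hx i
    have hsle : ∀ i, s ≤ x i := fun i =>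
      csInf_le (Set.Finite.bddBelow (Set.finite_range x)) ⟨i, rfl⟩
    -- third claim
    have hrw3 : (X * Aᵀ * (A * X ^ 2 * Aᵀ)⁻¹) *ᵥ ζx = Bᵀ *ᵥ ((B * Bᵀ)⁻¹ *ᵥ ζx) := by
      rw [← hBBT, hB, Matrix.transpose_mul, hXT, Matrix.mulVec_mulVec]
    have hthird : eucNorm ((X * Aᵀ * (A * X ^ 2 * Aᵀ)⁻¹) *ᵥ ζx)
        ≤ eucNorm ζx / Real.sqrt (lambdaMin (A * X ^ 2 * Aᵀ)) := by
      rw [hrw3, ← hBBT]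
      exact BT_bound B hPD2' (hBBT ▸ hl2) ζx
    -- second claim
    have hv2 : X⁻¹ *ᵥ lamx = -(X⁻¹ *ᵥ (Aᵀ *ᵥ ((A * Aᵀ)⁻¹ *ᵥ ζx))) := by
      rw [hlamx, Matrix.mulVec_neg]
      simp [Matrix.mulVec_mulVec, Matrix.mul_assoc]
    have h2b : eucNorm (Aᵀ *ᵥ ((A * Aᵀ)⁻¹ *ᵥ ζx))
        ≤ eucNorm ζx / Real.sqrt (lambdaMin (A * Aᵀ)) := BT_bound A hPD1 hl1 ζx
    have hsecond : eucNorm (X⁻¹ *ᵥ lamx)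
        ≤ eucNorm ζx / (s * Real.sqrt (lambdaMin (A * Aᵀ))) := by
      rw [hv2, enorm_neg']
      calc eucNorm (X⁻¹ *ᵥ (Aᵀ *ᵥ ((A * Aᵀ)⁻¹ *ᵥ ζx)))
          ≤ s⁻¹ * eucNorm (Aᵀ *ᵥ ((A * Aᵀ)⁻¹ *ᵥ ζx)) := enorm_diag_inv_le hx hspos hsle _
        _ ≤ s⁻¹ * (eucNorm ζx / Real.sqrt (lambdaMin (A * Aᵀ))) :=
            mul_le_mul_of_nonneg_left h2b (inv_nonneg.mpr hspos.le)
        _ = eucNorm ζx / (s * Real.sqrt (lambdaMin (A * Aᵀ))) := by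
            rw [div_mul_eq_div_div_swap, div_div]
            ring
    refine ⟨?_, hsecond, hthird⟩
    rw [hψx]
    calc eucNorm ((X * Aᵀ * (A * X ^ 2 * Aᵀ)⁻¹) *ᵥ ζx + X⁻¹ *ᵥ lamx)
        ≤ eucNorm ((X * Aᵀ * (A * X ^ 2 * Aᵀ)⁻¹) *ᵥ ζx) + eucNorm (X⁻¹ *ᵥ lamx) :=
          eucNorm_add_le _ _
      _ ≤ eucNorm ζx / Real.sqrt (lambdaMin (A * X ^ 2 * Aᵀ))
            + eucNorm ζx / (s * Real.sqrt (lambdaMin (A * Aᵀ))) := add_le_add hthird hsecond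
      _ = (1 / (s * Real.sqrt (lambdaMin (A * Aᵀ)))
            + 1 / Real.sqrt (lambdaMin (A * X ^ 2 * Aᵀ))) * eucNorm ζx := by ring
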